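/- Localized expected regret bound: Let X be a random context, and let γ(X) ≥ 0, δ(X) ≥ 0, R(X) ≥ 0 be measurable random variables with δ(X) square-integrable and satisfying the pointwise margin-local bound R(X) ≤ 2 δ(X) · 1{γ(X) ≤ 2 δ(X)} almost surely. Then for every threshold η > 0, E[R(X)] ≤ 2η · P(γ(X) ≤ 2η) + 2 E[δ(X)²] / η. -/

import Mathlib

open MeasureTheory

/-- **Localized expected regret bound.** If the nonnegative measurable random
variables `γ, δ, R` satisfy the pointwise margin-local bound
`R ≤ 2δ · 1{γ ≤ 2δ}` a.s. and `δ` is square-integrable, then for every threshold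
`η > 0`, `E[R] ≤ 2η P(γ ≤ 2η) + 2 E[δ²]/η`. -/
theorem localized_expected_regret_bound
    {Ω : Type*} [MeasurableSpace Ω]
    (μ : Measure Ω) [IsProbabilityMeasure μ]
    (γ δ R : Ω → ℝ)
    (hγm : Measurable γ) (hδm : Measurable δ) (hRm : Measurable R)
    (hγ0 : ∀ ω, 0 ≤ γ ω) (hδ0 : ∀ ω, 0 ≤ δ ω) (hR0 : ∀ ω, 0 ≤ R ω)
    (hδ2 : Integrable (fun ω => δ ω ^ 2) μ)
    (hpt : ∀ᵐ ω ∂μ,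
      R ω ≤ 2 * δ ω * (if γ ω ≤ 2 * δ ω then (1 : ℝ) else 0)) :
    ∀ η : ℝ, 0 < η →
      ∫ ω, R ω ∂μ
        ≤ 2 * η * (μ {ω | γ ω ≤ 2 * η}).toReal
          + 2 * (∫ ω, δ ω ^ 2 ∂μ) / η := by
  intro η hη
  set S : Set Ω := {ω | γ ω ≤ 2 * η} with hS
  have hSm : MeasurableSet S := measurableSet_le hγm measurable_const
  set f : Ω → ℝ := fun ω => S.indicator (fun _ => 2 * η) ω + 2 * δ ω ^ 2 / η
    with hf
  have hfint : Integrable f μ := by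
    apply Integrable.add
    · exact (integrable_const (2 * η)).indicator hSm
    · have := hδ2.const_mul 2
      exact this.div_const η
  have hRint : Integrable R μ := by
    refine Integrable.mono' hfint hRm.aestronglyMeasurable ?_
    filter_upwards [hpt] with ω h
    rw [Real.norm_eq_abs, abs_of_nonneg (hR0 ω)]
    refine h.trans ?_
    by_cases hc : γ ω ≤ 2 * δ ω
    · simp only [hc, if_true, mul_one]
      by_cases hd : δ ω ≤ η
      · have hmem : ω ∈ S := by
          simp only [hS, Set.mem_setOf_eq]
          linarith
        have : S.indicator (fun _ => 2 * η) ω = 2 * η := Set.indicator_of_mem hmem _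
        have h2 : 0 ≤ 2 * δ ω ^ 2 / η := by positivity
        simp only [hf]
        rw [this]
        nlinarith
      · push_neg at hd
        have h1 : 0 ≤ S.indicator (fun _ => 2 * η) ω :=
          Set.indicator_nonneg (fun _ _ => by positivity) ω
        have h2 : 2 * δ ω ≤ 2 * δ ω ^ 2 / η := by
          rw [le_div_iff₀ hη]
          nlinarith [hδ0 ω]
        simp only [hf]; linarith
    · simp only [hc, if_false, mul_zero]
      have h1 : 0 ≤ S.indicator (fun _ => 2 * η) ω :=
        Set.indicator_nonneg (fun _ _ => by positivity) ω
      have h2 : 0 ≤ 2 * δ ω ^ 2 / η := by positivity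
      simp only [hf]; linarith
  have hle : ∫ ω, R ω ∂μ ≤ ∫ ω, f ω ∂μ := by
    refine integral_mono_ae hRint hfint ?_
    filter_upwards [hpt] with ω h
    refine h.trans ?_
    by_cases hc : γ ω ≤ 2 * δ ω
    · simp only [hc, if_true, mul_one]
      by_cases hd : δ ω ≤ η
      · have hmem : ω ∈ S := by
          simp only [hS, Set.mem_setOf_eq]; linarith
        have : S.indicator (fun _ => 2 * η) ω = 2 * η := Set.indicator_of_mem hmem _
        have h2 : 0 ≤ 2 * δ ω ^ 2 / η := by positivity
        simp only [hf]; rw [this]; nlinarith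
      · push_neg at hd
        have h1 : 0 ≤ S.indicator (fun _ => 2 * η) ω :=
          Set.indicator_nonneg (fun _ _ => by positivity) ω
        have h2 : 2 * δ ω ≤ 2 * δ ω ^ 2 / η := by
          rw [le_div_iff₀ hη]; nlinarith [hδ0 ω]
        simp only [hf]; linarith
    · simp only [hc, if_false, mul_zero]
      have h1 : 0 ≤ S.indicator (fun _ => 2 * η) ω :=
        Set.indicator_nonneg (fun _ _ => by positivity) ω
      have h2 : 0 ≤ 2 * δ ω ^ 2 / η := by positivity
      simp only [hf]; linarith
  refine hle.trans_eq ?_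
  rw [hf]
  rw [integral_add ((integrable_const (2 * η)).indicator hSm)
      ((hδ2.const_mul 2).div_const η)]
  congr 1
  · rw [integral_indicator_const _ hSm]
    rw [smul_eq_mul, mul_comm]; rfl
  · rw [integral_div, integral_const_mul]
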